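/- Let u₀, u₁ be convex functions on an open convex set P ⊂ ℝⁿ whose Alexandrov Hessians ∇²u₀(y), ∇²u₁(y) are positive definite a.e., and suppose the function t ↦ -∫_P log det(∇²((1-t)u₀ + t u₁)(y)) dy is affine on [0,1] with finite values. Then ∇²u₀ = ∇²u₁ almost everywhere on P. -/

import Mathlib

open MeasureTheory Filter Topology
open scoped RealInnerProductSpace

/-- `u` has a second-order (Alexandrov) Taylor expansion at `y` with subgradient `g` and
Hessian matrix `H`. -/
def HasAlexandrovHessianAt {n : ℕ} (u : EuclideanSpace ℝ (Fin n) → ℝ)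
    (g : EuclideanSpace ℝ (Fin n)) (H : Matrix (Fin n) (Fin n) ℝ)
    (y : EuclideanSpace ℝ (Fin n)) : Prop :=
  Filter.Tendsto (fun h : EuclideanSpace ℝ (Fin n) =>
      (u (y + h) - u y - ⟪g, h⟫ - (∑ i, ∑ j, H i j * h i * h j) / 2) / ‖h‖ ^ 2)
    (𝓝[≠] 0) (𝓝 0)


open Matrix

lemma scalar_log_avg {x : ℝ} (hx : 0 < x) :
    Real.log x / 2 ≤ Real.log (2⁻¹ * (1 + x)) ∧
      (Real.log (2⁻¹ * (1 + x)) = Real.log x / 2 → x = 1) := by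
  have hs := Real.sq_sqrt hx.le
  have hsn := Real.sqrt_nonneg x
  have hsp : 0 < Real.sqrt x := Real.sqrt_pos.mpr hx
  have hle : Real.sqrt x ≤ 2⁻¹ * (1 + x) := by nlinarith [sq_nonneg (1 - Real.sqrt x)]
  have hlog : Real.log (Real.sqrt x) = Real.log x / 2 := Real.log_sqrt hx.le
  constructor
  · rw [← hlog]; exact Real.log_le_log hsp hle
  · intro heq
    by_contra hne
    have hsne : Real.sqrt x ≠ 1 := fun h => hne (by nlinarith)
    have hlt : Real.sqrt x < 2⁻¹ * (1 + x) := by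
      rcases lt_or_gt_of_ne hsne with h | h <;> nlinarith [sq_nonneg (1 - Real.sqrt x)]
    have := Real.log_lt_log hsp hlt
    rw [hlog, heq] at this
    exact lt_irrefl _ this

lemma posDef_conj {N : Type*} [Fintype N] [DecidableEq N] {A C : Matrix N N ℝ}
    (hA : A.PosDef) (hC : IsUnit C.det) : (Cᴴ * A * C).PosDef := by
  refine Matrix.PosDef.of_dotProduct_mulVec_pos (Matrix.isHermitian_conjTranspose_mul_mul C hA.1) fun x hx => ?_
  have hCx : C *ᵥ x ≠ 0 := by
    intro h
    apply hx
    have := congrArg (fun v => C⁻¹ *ᵥ v) h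
    simpa [Matrix.mulVec_mulVec, Matrix.nonsing_inv_mul _ hC] using this
  simpa only [Matrix.star_mulVec, Matrix.dotProduct_mulVec, Matrix.vecMul_vecMul]
    using hA.dotProduct_mulVec_pos hCx

lemma logdet_half_one_add {N : Type*} [Fintype N] [DecidableEq N] {M : Matrix N N ℝ}
    (hM : M.PosDef) :
    0 < ((2⁻¹ : ℝ) • (1 + M)).det ∧
    Real.log M.det / 2 ≤ Real.log ((2⁻¹ : ℝ) • (1 + M)).det ∧
      (Real.log ((2⁻¹ : ℝ) • (1 + M)).det = Real.log M.det / 2 → M = 1) := by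
  have hH := hM.1
  set μ := hH.eigenvalues with hμdef
  have hμ : ∀ i, 0 < μ i := hM.eigenvalues_pos
  set U := (hH.eigenvectorUnitary : Matrix N N ℝ) with hUdef
  have hUU : U * star U = 1 := Matrix.mem_unitaryGroup_iff.mp hH.eigenvectorUnitary.2
  have hdiag : diagonal ((RCLike.ofReal : ℝ → ℝ) ∘ μ) = diagonal μ := by
    congr 1
  have hspec : M = U * diagonal μ * star U := by
    rw [← hdiag]; exact hH.spectral_theorem
  have h1M : (2⁻¹ : ℝ) • (1 + M) = U * diagonal (fun i => 2⁻¹ * (1 + μ i)) * star U := by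
    have hd : diagonal (fun i => 2⁻¹ * (1 + μ i)) = (2⁻¹ : ℝ) • (1 + diagonal μ) := by
      ext i j
      by_cases h : i = j
      · subst h; simp [Matrix.one_apply]
      · simp [Matrix.diagonal_apply_ne _ h, Matrix.one_apply, h]
    rw [hd, Matrix.mul_smul, Matrix.smul_mul, mul_add, add_mul, mul_one, hUU, ← hspec]
  have hdet1M : ((2⁻¹ : ℝ) • (1 + M)).det = ∏ i, (2⁻¹ * (1 + μ i)) := by
    rw [h1M, det_mul_right_comm, hUU, one_mul, det_diagonal]
  have hdetM : M.det = ∏ i, μ i := by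
    rw [hspec, det_mul_right_comm, hUU, one_mul, det_diagonal]
  have hlogM : Real.log M.det = ∑ i, Real.log (μ i) := by
    rw [hdetM, Real.log_prod]
    exact fun i _ => (hμ i).ne'
  have hlog1M : Real.log ((2⁻¹ : ℝ) • (1 + M)).det = ∑ i, Real.log (2⁻¹ * (1 + μ i)) := by
    rw [hdet1M, Real.log_prod]
    intro i _
    exact ne_of_gt (by nlinarith [hμ i])
  have hterm : ∀ i ∈ Finset.univ, Real.log (μ i) / 2 ≤ Real.log (2⁻¹ * (1 + μ i)) :=
    fun i _ => (scalar_log_avg (hμ i)).1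
  refine ⟨?_, ?_, ?_⟩
  · rw [hdet1M]
    apply Finset.prod_pos
    intro i _
    nlinarith [hμ i]
  · rw [hlogM, hlog1M, Finset.sum_div]
    exact Finset.sum_le_sum hterm
  · intro heq
    rw [hlogM, hlog1M, Finset.sum_div] at heq
    have hall := (Finset.sum_eq_sum_iff_of_le hterm).mp heq.symm
    have hμ1 : ∀ i, μ i = 1 := fun i =>
      (scalar_log_avg (hμ i)).2 ((hall i (Finset.mem_univ i))).symm
    have hd1 : diagonal μ = 1 := by
      have : μ = fun _ => 1 := funext hμ1
      rw [this]
      ext i j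
      by_cases h : i = j
      · subst h; simp
      · simp [Matrix.diagonal_apply_ne _ h, Matrix.one_apply, h]
    rw [hspec, hd1, mul_one, hUU]

open scoped MatrixOrder in
lemma logdet_avg_le {N : Type*} [Fintype N] [DecidableEq N] {A B : Matrix N N ℝ}
    (hA : A.PosDef) (hB : B.PosDef) :
    (Real.log A.det + Real.log B.det) / 2 ≤ Real.log ((2⁻¹ : ℝ) • (A + B)).det ∧
      (Real.log ((2⁻¹ : ℝ) • (A + B)).det = (Real.log A.det + Real.log B.det) / 2 → A = B) := by
  have hAs := hA.posSemidef
  set S := CFC.sqrt A with hSdef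
  have hS : S.PosSemidef := Matrix.nonneg_iff_posSemidef.mp (CFC.sqrt_nonneg A)
  have hSS : S * S = A := CFC.sqrt_mul_sqrt_self A hAs.nonneg
  have hdetS : S.det * S.det = A.det := by rw [← det_mul, hSS]
  have hdetSne : S.det ≠ 0 := by
    intro h
    have := hA.det_pos
    rw [← hdetS, h, mul_zero] at this
    exact lt_irrefl _ this
  have hSu : IsUnit S.det := hdetSne.isUnit
  have hSiS : S⁻¹ * S = 1 := Matrix.nonsing_inv_mul _ hSu
  have hSSi : S * S⁻¹ = 1 := Matrix.mul_nonsing_inv _ hSu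
  have hSiH : (S⁻¹).IsHermitian := hS.1.inv
  have hSiu : IsUnit (S⁻¹).det := by
    have hd : (S⁻¹).det = S.det⁻¹ := by
      rw [Matrix.det_nonsing_inv, Ring.inverse_eq_inv']
    rw [hd]
    exact (inv_ne_zero hdetSne).isUnit
  set M := S⁻¹ * B * S⁻¹ with hMdef
  have hM : M.PosDef := by
    have h := posDef_conj hB hSiu
    rwa [hSiH] at h
  have hBM : B = S * M * S := by
    rw [hMdef]
    calc B = (S * S⁻¹) * B * (S⁻¹ * S) := by rw [hSSi, hSiS, one_mul, mul_one]
    _ = S * (S⁻¹ * B * S⁻¹) * S := by simp only [Matrix.mul_assoc]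
  have hmid : (2⁻¹ : ℝ) • (A + B) = S * ((2⁻¹ : ℝ) • (1 + M)) * S := by
    rw [Matrix.mul_smul, Matrix.smul_mul]
    congr 1
    rw [mul_add, mul_one, add_mul, hSS, ← hBM]
  obtain ⟨hdpos, hle, heqc⟩ := logdet_half_one_add hM
  have hdetmid : ((2⁻¹ : ℝ) • (A + B)).det = A.det * ((2⁻¹ : ℝ) • (1 + M)).det := by
    rw [hmid, det_mul, det_mul, ← hdetS]; ring
  have hdetB : B.det = A.det * M.det := by
    rw [hBM, det_mul, det_mul, ← hdetS]; ring
  have hlogmid : Real.log ((2⁻¹ : ℝ) • (A + B)).det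
      = Real.log A.det + Real.log ((2⁻¹ : ℝ) • (1 + M)).det := by
    rw [hdetmid, Real.log_mul hA.det_pos.ne' hdpos.ne']
  have hlogB : Real.log B.det = Real.log A.det + Real.log M.det := by
    rw [hdetB, Real.log_mul hA.det_pos.ne' hM.det_pos.ne']
  constructor
  · rw [hlogmid, hlogB]; linarith
  · intro heq
    rw [hlogmid, hlogB] at heq
    have hM1 : M = 1 := heqc (by linarith)
    rw [hBM, hM1, mul_one, hSS]

/-- If `u₀, u₁` are convex on an open convex `P ⊆ ℝⁿ` with a.e. positive definite Alexandrov
Hessians `H₀, H₁`, and `t ↦ -∫_P log det((1-t)H₀ + tH₁) dy` is affine on `[0,1]` with finite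
values, then `H₀ = H₁` a.e. on `P`. -/
theorem hessians_eq_of_affine_logDet_integral {n : ℕ}
    (P : Set (EuclideanSpace ℝ (Fin n))) (hP : IsOpen P) (hPc : Convex ℝ P)
    (u₀ u₁ : EuclideanSpace ℝ (Fin n) → ℝ)
    (h₀ : ConvexOn ℝ P u₀) (h₁ : ConvexOn ℝ P u₁)
    (H₀ H₁ : EuclideanSpace ℝ (Fin n) → Matrix (Fin n) (Fin n) ℝ)
    (hH₀ : ∀ᵐ y ∂(volume.restrict P),
      (H₀ y).PosDef ∧ ∃ g₀, HasAlexandrovHessianAt u₀ g₀ (H₀ y) y)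
    (hH₁ : ∀ᵐ y ∂(volume.restrict P),
      (H₁ y).PosDef ∧ ∃ g₁, HasAlexandrovHessianAt u₁ g₁ (H₁ y) y)
    -- finite values:
    (hint : ∀ t ∈ Set.Icc (0:ℝ) 1,
      IntegrableOn (fun y => Real.log (((1 - t) • H₀ y + t • H₁ y).det)) P)
    -- affineness of `t ↦ -∫_P log det((1-t)H₀ + tH₁)` on `[0,1]`:
    (haff : ∀ t ∈ Set.Icc (0:ℝ) 1,
      -∫ y in P, Real.log (((1 - t) • H₀ y + t • H₁ y).det)
        = (1 - t) * (-∫ y in P, Real.log ((H₀ y).det))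
          + t * (-∫ y in P, Real.log ((H₁ y).det))) :
    ∀ᵐ y ∂(volume.restrict P), H₀ y = H₁ y := by
  classical
  have hpos : ∀ᵐ y ∂(volume.restrict P), (H₀ y).PosDef ∧ (H₁ y).PosDef := by
    filter_upwards [hH₀, hH₁] with y h0 h1
    exact ⟨h0.1, h1.1⟩
  have h12 : (1:ℝ) - 2⁻¹ = 2⁻¹ := by norm_num
  have i₀ : IntegrableOn (fun y => Real.log ((H₀ y).det)) P := by
    simpa using hint 0 (by norm_num)
  have i₁ : IntegrableOn (fun y => Real.log ((H₁ y).det)) P := by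
    simpa using hint 1 (by norm_num)
  have im : IntegrableOn
      (fun y => Real.log ((((1:ℝ) - 2⁻¹) • H₀ y + (2⁻¹:ℝ) • H₁ y).det)) P :=
    hint 2⁻¹ (by norm_num)
  have ham := haff 2⁻¹ (by norm_num)
  set g : EuclideanSpace ℝ (Fin n) → ℝ := fun y =>
    Real.log ((((1:ℝ) - 2⁻¹) • H₀ y + (2⁻¹:ℝ) • H₁ y).det)
      - (Real.log ((H₀ y).det) + Real.log ((H₁ y).det)) / 2 with hg
  have hiadd : IntegrableOn
      (fun y => (Real.log ((H₀ y).det) + Real.log ((H₁ y).det)) / 2) P :=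
    (i₀.add i₁).div_const 2
  have hgint : Integrable g (volume.restrict P) := im.sub hiadd
  have hint0 : ∫ y in P, g y = 0 := by
    rw [hg]
    rw [integral_sub im hiadd, integral_div, integral_add i₀ i₁]
    linarith [ham]
  have hg0 : 0 ≤ᵐ[volume.restrict P] g := by
    filter_upwards [hpos] with y hy
    have hmid : ((1:ℝ) - 2⁻¹) • H₀ y + (2⁻¹:ℝ) • H₁ y = (2⁻¹:ℝ) • (H₀ y + H₁ y) := by
      rw [h12, smul_add]
    simp only [hg, Pi.zero_apply, hmid]
    have := (logdet_avg_le hy.1 hy.2).1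
    linarith
  have hgz : g =ᵐ[volume.restrict P] 0 :=
    (integral_eq_zero_iff_of_nonneg_ae hg0 hgint).mp hint0
  filter_upwards [hgz, hpos] with y hzy hy
  have hmid : ((1:ℝ) - 2⁻¹) • H₀ y + (2⁻¹:ℝ) • H₁ y = (2⁻¹:ℝ) • (H₀ y + H₁ y) := by
    rw [h12, smul_add]
  have hval : Real.log (((2⁻¹:ℝ) • (H₀ y + H₁ y)).det)
      = (Real.log ((H₀ y).det) + Real.log ((H₁ y).det)) / 2 := by
    have h := hzy
    simp only [hg, Pi.zero_apply, hmid] at h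
    linarith
  exact (logdet_avg_le hy.1 hy.2).2 hval
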